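/- arXiv:0910.4933 — 7 statements merged into one kernel-verified Lean document; each statement's English description precedes it below -/
import Mathlib

section
/- Let k ∈ ℝ and let c : ℝ → ℝ be a C² function with c(s) > 0 for all s ∈ ℝ and c″(s)·c(s) − c′(s)² = k for all s ∈ ℝ. Then k ≥ 0. -/
open Set

/-- Auxiliary: a positive differentiable function cannot have derivative ≤ m < 0
on a right half-line. -/
lemma aux_fwd (c : ℝ → ℝ) (hd : Differentiable ℝ c) (hpos : ∀ s, 0 < c s)
    (t m : ℝ) (hm : m < 0) (hb : ∀ s, t ≤ s → deriv c s ≤ m) : False := by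
  set h : ℝ → ℝ := fun s => c s - m * s with hh
  have hdh : Differentiable ℝ h := hd.sub (differentiable_id.const_mul m)
  have hderiv : ∀ s, deriv h s = deriv c s - m := by
    intro s
    have : HasDerivAt h (deriv c s - m) s := by
      have := (hd s).hasDerivAt.sub ((hasDerivAt_id' s).const_mul m)
      rw [mul_one] at this
      exact this
    exact this.deriv
  have hanti : AntitoneOn h (Ici t) := by
    apply antitoneOn_of_deriv_nonpos (convex_Ici t) hdh.continuous.continuousOn
      (hdh.differentiableOn)
    intro x hx
    rw [interior_Ici] at hx
    rw [hderiv]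
    have := hb x (le_of_lt hx)
    linarith
  have hx : 0 < c t / (-m) := div_pos (hpos t) (by linarith)
  have htS : t ≤ t + c t / (-m) + 1 := by linarith
  have h2 := hanti (self_mem_Ici) htS htS
  simp only [hh] at h2
  have hexp : m * (t + c t / (-m) + 1) = m * t - c t + m := by
    have hm' : (-m) ≠ 0 := by linarith
    have hm'' : m ≠ 0 := hm.ne
    field_simp
    ring
  have := hpos (t + c t / (-m) + 1)
  linarith [h2, hexp]

lemma aux_bwd (c : ℝ → ℝ) (hd : Differentiable ℝ c) (hpos : ∀ s, 0 < c s)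
    (t m : ℝ) (hm : 0 < m) (hb : ∀ s, s ≤ t → m ≤ deriv c s) : False := by
  apply aux_fwd (fun s => c (-s)) (hd.comp (differentiable_neg)) (fun s => hpos (-s))
    (-t) (-m) (by linarith)
  intro s hs
  have hder : deriv (fun s => c (-s)) s = -deriv c (-s) := by
    have : HasDerivAt (fun s => c (-s)) (deriv c (-s) * (-1)) s :=
      (hd (-s)).hasDerivAt.comp s (by simpa using (hasDerivAt_neg s))
    simpa using this.deriv
  rw [hder]
  have := hb (-s) (by linarith)
  linarith

/-- If a positive `C²` function `c` on `ℝ` satisfies `c″c − (c′)² = k`,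
then `k ≥ 0`. -/
theorem stmt_3 (k : ℝ) (c : ℝ → ℝ)
    (hc : ContDiff ℝ 2 c)
    (hpos : ∀ s : ℝ, 0 < c s)
    (hode : ∀ s : ℝ, deriv (deriv c) s * c s - (deriv c s) ^ 2 = k) :
    0 ≤ k := by
  by_contra hk
  push_neg at hk
  have hd : Differentiable ℝ c := hc.differentiable (by norm_num)
  have hd2 : Differentiable ℝ (deriv c) := by
    have h1 : ContDiff ℝ ((1 + 1 : ℕ) : WithTop ℕ∞) c := by exact_mod_cast hc
    have := ContDiff.iterate_deriv' 1 1 h1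
    simpa using this.differentiable (by norm_num)
  have hcne : ∀ s, c s ≠ 0 := fun s => (hpos s).ne'
  -- conserved quantity φ = ((c')² + k)/c²
  set φ : ℝ → ℝ := fun s => ((deriv c s) ^ 2 + k) / (c s) ^ 2 with hφ
  have hφd : ∀ s, HasDerivAt φ 0 s := by
    intro s
    have h1 : HasDerivAt (fun s => (deriv c s) ^ 2 + k)
        (2 * deriv c s * deriv (deriv c) s) s := by
      have := ((hd2 s).hasDerivAt.pow 2).add_const k
      simpa [mul_comm, mul_assoc, mul_left_comm] using this
    have h2 : HasDerivAt (fun s => (c s) ^ 2) (2 * c s * deriv c s) s := by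
      have := (hd s).hasDerivAt.fun_pow 2
      simpa [mul_comm, mul_assoc, mul_left_comm] using this
    have h3 := h1.div h2 (pow_ne_zero 2 (hcne s))
    have key : deriv (deriv c) s * c s = (deriv c s) ^ 2 + k := by linarith [hode s]
    have hval : (2 * deriv c s * deriv (deriv c) s * (c s) ^ 2 -
        ((deriv c s) ^ 2 + k) * (2 * c s * deriv c s)) / ((c s) ^ 2) ^ 2 = 0 := by
      rw [div_eq_zero_iff]
      left
      linear_combination (2 * deriv c s * c s) * key
    rw [hval] at h3
    exact h3
  have hφconst : ∀ s, φ s = φ 0 := by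
    intro s
    exact is_const_of_deriv_eq_zero (fun x => (hφd x).differentiableAt)
      (fun x => (hφd x).deriv) s 0
  set r : ℝ := φ 0 with hrdef
  have hcons : ∀ s, (deriv c s) ^ 2 + k = r * (c s) ^ 2 := by
    intro s
    have := hφconst s
    rw [hφ] at this
    rw [div_eq_iff (pow_ne_zero 2 (hcne s))] at this
    exact this
  have hc'' : ∀ s, deriv (deriv c) s = r * c s := by
    intro s
    have h4 : deriv (deriv c) s * c s = (r * c s) * c s := by
      linear_combination hode s + hcons s
    exact mul_right_cancel₀ (hcne s) h4
  rcases lt_or_ge r 0 with hr | hr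
  · -- c'' = r c < 0 everywhere : strictly concave positive function, impossible
    have hneg : ∀ s, deriv (deriv c) s < 0 := by
      intro s; rw [hc'' s]; exact mul_neg_of_neg_of_pos hr (hpos s)
    have hanti : StrictAnti (deriv c) := strictAnti_of_deriv_neg hneg
    rcases lt_or_ge (deriv c 1) 0 with h1 | h1
    · exact aux_fwd c hd hpos 1 (deriv c 1) h1
        (fun s hs => hanti.antitone hs)
    · have h0 : 0 < deriv c 0 := lt_of_le_of_lt h1 (hanti (by norm_num))
      exact aux_bwd c hd hpos 0 (deriv c 0) h0
        (fun s hs => hanti.antitone hs)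
  · -- (c')² = r c² - k ≥ -k > 0 : c' bounded away from 0, c monotone unbounded
    have hsq : ∀ s, -k ≤ (deriv c s) ^ 2 := by
      intro s
      have := hcons s
      nlinarith [sq_nonneg (c s), hpos s]
    have hne : ∀ s, deriv c s ≠ 0 := by
      intro s h
      have := hsq s
      rw [h] at this
      norm_num at this
      linarith
    have habs : ∀ s, Real.sqrt (-k) ≤ |deriv c s| := by
      intro s
      rw [← Real.sqrt_sq_eq_abs]
      exact Real.sqrt_le_sqrt (hsq s)
    have hsqpos : 0 < Real.sqrt (-k) := Real.sqrt_pos.mpr (by linarith)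
    rcases lt_or_gt_of_ne (hne 0) with h0 | h0
    · -- c' < 0 everywhere
      have hall : ∀ s, deriv c s < 0 := by
        intro s
        rcases lt_or_gt_of_ne (hne s) with h | h
        · exact h
        · exfalso
          have hcont : Continuous (deriv c) := hd2.continuous
          rcases le_total 0 s with hs | hs
          · obtain ⟨x, _, hx⟩ := intermediate_value_Icc hs hcont.continuousOn
              (by constructor <;> [linarith; linarith] :
                (0:ℝ) ∈ Icc (deriv c 0) (deriv c s))
            exact hne x hx
          · obtain ⟨x, _, hx⟩ := intermediate_value_Icc' hs hcont.continuousOn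
              (by constructor <;> [linarith; linarith] :
                (0:ℝ) ∈ Icc (deriv c 0) (deriv c s))
            exact hne x hx
      apply aux_fwd c hd hpos 0 (-Real.sqrt (-k)) (by linarith)
      intro s _
      have := habs s
      rw [abs_of_neg (hall s)] at this
      linarith
    · -- c' > 0 everywhere
      have hall : ∀ s, 0 < deriv c s := by
        intro s
        rcases lt_or_gt_of_ne (hne s) with h | h
        · exfalso
          have hcont : Continuous (deriv c) := hd2.continuous
          rcases le_total 0 s with hs | hs
          · obtain ⟨x, _, hx⟩ := intermediate_value_Icc' hs hcont.continuousOn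
              (by constructor <;> [linarith; linarith] :
                (0:ℝ) ∈ Icc (deriv c s) (deriv c 0))
            exact hne x hx
          · obtain ⟨x, _, hx⟩ := intermediate_value_Icc hs hcont.continuousOn
              (by constructor <;> [linarith; linarith] :
                (0:ℝ) ∈ Icc (deriv c s) (deriv c 0))
            exact hne x hx
        · exact h
      apply aux_bwd c hd hpos 0 (Real.sqrt (-k)) hsqpos
      intro s _
      have := habs s
      rw [abs_of_pos (hall s)] at this
      linarith
end

section
/- Let k > 0 and let c : ℝ → ℝ be a C² function with c(s) > 0 for all s ∈ ℝ and c″(s)·c(s) − c′(s)² = k for all s ∈ ℝ. Then there exist r > 0 and b ∈ ℝ such that c(s) = (√k / r)·cosh(rs + b) for all s ∈ ℝ. -/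
/-- The `k > 0` case: a positive `C²` solution of `c″c − (c′)² = k` on `ℝ` is
`c(s) = (√k / r) cosh(rs + b)` for some `r > 0` and `b ∈ ℝ`. -/
theorem stmt_5 (k : ℝ) (hk : 0 < k) (c : ℝ → ℝ)
    (hc : ContDiff ℝ 2 c)
    (hpos : ∀ s : ℝ, 0 < c s)
    (hode : ∀ s : ℝ, deriv (deriv c) s * c s - (deriv c s) ^ 2 = k) :
    ∃ r : ℝ, 0 < r ∧ ∃ b : ℝ,
      ∀ s : ℝ, c s = (Real.sqrt k / r) * Real.cosh (r * s + b) := by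
  set f := deriv c with hf
  have h2 : ContDiff ℝ ((1 : WithTop ℕ∞) + 1) c := by rw [one_add_one_eq_two]; exact hc
  obtain ⟨hd1, hc1⟩ := contDiff_succ_iff_deriv.mp h2
  have hd2 : Differentiable ℝ f := hc1.2.differentiable one_ne_zero
  have hcd : ∀ s, HasDerivAt c (f s) s := fun s => (hd1 s).hasDerivAt
  have hfd : ∀ s, HasDerivAt f (deriv f s) s := fun s => (hd2 s).hasDerivAt
  have hcne : ∀ s, c s ≠ 0 := fun s => (hpos s).ne'
  -- conserved quantity
  set g : ℝ → ℝ := fun s => (f s ^ 2 + k) / (c s) ^ 2 with hg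
  have hgd : ∀ s, HasDerivAt g 0 s := by
    intro s
    have hp : HasDerivAt (fun s => f s ^ 2 + k) (2 * f s * deriv f s) s := by
      have := ((hfd s).pow 2).add_const k
      refine HasDerivAt.congr_deriv this (Eq.symm ?_); push_cast; ring
    have hq : HasDerivAt (fun s => (c s) ^ 2) (2 * c s * f s) s := by
      have := (hcd s).pow 2
      refine HasDerivAt.congr_deriv this (Eq.symm ?_); push_cast; ring
    have := hp.div hq (pow_ne_zero 2 (hcne s))
    refine HasDerivAt.congr_deriv this (Eq.symm ?_)
    rw [eq_comm, div_eq_zero_iff]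
    left
    linear_combination (2 * f s * c s) * (hode s)
  have hgconst : ∀ s, g s = g 0 :=
    fun s => is_const_of_deriv_eq_zero (fun x => (hgd x).differentiableAt)
      (fun x => (hgd x).deriv) s 0
  set R := g 0 with hRdef
  have hRpos : 0 < R := by
    have : 0 < (f 0 ^ 2 + k) / (c 0) ^ 2 :=
      div_pos (by nlinarith [sq_nonneg (f 0)]) (pow_pos (hpos 0) 2)
    simpa [hRdef, hg] using this
  have hR : ∀ s, f s ^ 2 + k = R * c s ^ 2 := by
    intro s
    have := hgconst s
    rw [hg] at this
    simp only at this
    rw [div_eq_iff (pow_ne_zero 2 (hcne s))] at this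
    linarith [this]
  set r := Real.sqrt R with hrdef
  have hr : 0 < r := Real.sqrt_pos.mpr hRpos
  have hr2 : r ^ 2 = R := Real.sq_sqrt hRpos.le
  -- linear ODE
  have hlin : ∀ s, deriv f s = r ^ 2 * c s := by
    intro s
    have h1 : deriv f s * c s = (r ^ 2 * c s) * c s := by
      rw [hr2]
      have := hode s
      have := hR s
      nlinarith
    exact mul_right_cancel₀ (hcne s) h1
  set v : ℝ → ℝ := fun s => f s + r * c s with hvdef
  set u : ℝ → ℝ := fun s => f s - r * c s with hudef
  have hvd : ∀ s, HasDerivAt v (r * v s) s := by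
    intro s
    have := (hfd s).add ((hcd s).const_mul r)
    refine HasDerivAt.congr_deriv this (Eq.symm ?_)
    simp only [hvdef]
    rw [hlin s]; ring
  have hud : ∀ s, HasDerivAt u (-r * u s) s := by
    intro s
    have := (hfd s).sub ((hcd s).const_mul r)
    refine HasDerivAt.congr_deriv this (Eq.symm ?_)
    simp only [hudef]
    rw [hlin s]; ring
  -- solve v
  have hvsol : ∀ s, v s = v 0 * Real.exp (r * s) := by
    have hw : ∀ s, HasDerivAt (fun s => v s * Real.exp (-(r * s))) 0 s := by
      intro s
      have he : HasDerivAt (fun s => Real.exp (-(r * s)))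
          (Real.exp (-(r * s)) * (-r)) s := by
        have hi : HasDerivAt (fun s : ℝ => -(r * s)) (-r) s := by
          exact ((hasDerivAt_id s).const_mul r).neg.congr_deriv (by ring)
        exact hi.exp
      have := (hvd s).mul he
      refine HasDerivAt.congr_deriv this (Eq.symm ?_)
      ring
    have hwc : ∀ s, v s * Real.exp (-(r * s)) = v 0 * Real.exp (-(r * 0)) :=
      fun s => is_const_of_deriv_eq_zero (fun x => (hw x).differentiableAt)
        (fun x => (hw x).deriv) s 0
    intro s
    have := hwc s
    rw [Real.exp_neg, Real.exp_neg] at this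
    have hepos := Real.exp_pos (r * s)
    field_simp at this ⊢
    simp only [mul_zero, Real.exp_zero] at this
    linarith [this]
  have husol : ∀ s, u s = u 0 * Real.exp (-(r * s)) := by
    have hw : ∀ s, HasDerivAt (fun s => u s * Real.exp (r * s)) 0 s := by
      intro s
      have he : HasDerivAt (fun s => Real.exp (r * s))
          (Real.exp (r * s) * r) s := by
        have hi : HasDerivAt (fun s : ℝ => r * s) r s := by
          simpa using (hasDerivAt_id s).const_mul r
        exact hi.exp
      have := (hud s).mul he
      refine HasDerivAt.congr_deriv this (Eq.symm ?_)
      ring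
    have hwc : ∀ s, u s * Real.exp (r * s) = u 0 * Real.exp (r * 0) :=
      fun s => is_const_of_deriv_eq_zero (fun x => (hw x).differentiableAt)
        (fun x => (hw x).deriv) s 0
    intro s
    have := hwc s
    have hepos := Real.exp_pos (r * s)
    rw [Real.exp_neg]
    field_simp at this ⊢
    simp only [mul_zero, Real.exp_zero] at this
    linarith [this]
  -- signs at 0
  have huv : u 0 * v 0 = -k := by
    have h1 := hR 0
    simp only [hudef, hvdef]
    nlinarith [hr2]
  have hvu : v 0 - u 0 = 2 * r * c 0 := by simp only [hudef, hvdef]; ring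
  have hv0 : 0 < v 0 := by
    by_contra h
    push_neg at h
    have h1 : 0 < 2 * r * c 0 := mul_pos (mul_pos two_pos hr) (hpos 0)
    have hu0 : u 0 < 0 := by linarith
    nlinarith [mul_nonneg (neg_nonneg.mpr h) (neg_nonneg.mpr hu0.le)]
  set sk := Real.sqrt k with hskdef
  have hsk : 0 < sk := Real.sqrt_pos.mpr hk
  have hsk2 : sk ^ 2 = k := Real.sq_sqrt hk.le
  refine ⟨r, hr, Real.log (v 0 / sk), fun s => ?_⟩
  have heb : Real.exp (Real.log (v 0 / sk)) = v 0 / sk :=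
    Real.exp_log (by positivity)
  have hcs : c s = (v s - u s) / (2 * r) := by
    simp only [hudef, hvdef]
    field_simp
    ring
  rw [hcs, hvsol s, husol s, Real.cosh_eq, Real.exp_add, heb, neg_add,
    Real.exp_add, Real.exp_neg, Real.exp_neg, heb]
  have hE := Real.exp_pos (r * s)
  field_simp
  linear_combination (-1) * huv +
    (-1) * hsk2
end

section
/- Let ε ∈ {−1, 1}, let c : ℝ → ℝ be C² with c(s) > 0 for all s, let h : ℝ → ℝ be C² with h(t₀) ≠ 0 for some t₀ ∈ ℝ, and let a : ℝ² → ℝ be a C² function satisfying, for all (s, t) ∈ ℝ²: ∂a/∂s (s,t) = −ε·h′(t)/c(s)² and ∂a/∂t (s,t) = −h(t)·c′(s)/c(s). Then there exists a constant k ∈ ℝ such that c″(s)·c(s) − c′(s)² = k for all s ∈ ℝ and h″(t) = ε·k·h(t) for all t ∈ ℝ. -/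
/-- Separation of variables from the Killing equations on the static surface
`ℝ ×_{εc} ℝ`: equality of mixed partials of `a` forces
`c″c − (c′)² = k` and `h″ = εkh` for a single constant `k`. -/
theorem stmt_6 (ε : ℝ) (hε : ε = -1 ∨ ε = 1)
    (c : ℝ → ℝ) (hc : ContDiff ℝ 2 c) (hcpos : ∀ s : ℝ, 0 < c s)
    (h : ℝ → ℝ) (hh : ContDiff ℝ 2 h) (t₀ : ℝ) (ht₀ : h t₀ ≠ 0)
    (a : ℝ → ℝ → ℝ) (ha : ContDiff ℝ 2 (fun p : ℝ × ℝ => a p.1 p.2))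
    (has : ∀ s t : ℝ, deriv (fun s' => a s' t) s = -ε * deriv h t / (c s) ^ 2)
    (hat : ∀ s t : ℝ, deriv (fun t' => a s t') t = -h t * deriv c s / c s) :
    ∃ k : ℝ, (∀ s : ℝ, deriv (deriv c) s * c s - (deriv c s) ^ 2 = k) ∧
      (∀ t : ℝ, deriv (deriv h) t = ε * k * h t) := by
  have hε2 : ε * ε = 1 := by rcases hε with rfl | rfl <;> norm_num
  set f : ℝ × ℝ → ℝ := fun p => a p.1 p.2 with hfdef
  have hfd : Differentiable ℝ f := ha.differentiable two_ne_zero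
  have hF : ContDiff ℝ 1 (fderiv ℝ f) := ha.fderiv_right (by norm_num)
  have hFd : Differentiable ℝ (fderiv ℝ f) := hF.differentiable one_ne_zero
  -- differentiability of deriv h, deriv c
  have hh1 : Differentiable ℝ (deriv h) :=
    (hh.iterate_deriv' 1 1).differentiable one_ne_zero
  have hc1 : Differentiable ℝ (deriv c) :=
    (hc.iterate_deriv' 1 1).differentiable one_ne_zero
  have hcd : Differentiable ℝ c := hc.differentiable two_ne_zero
  -- first partials as applications of fderiv
  have hA : ∀ s t : ℝ, fderiv ℝ f (s, t) (1, 0) = -ε * deriv h t / (c s) ^ 2 := by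
    intro s t
    have h1 : HasDerivAt (fun s' : ℝ => (s', t)) ((1 : ℝ), (0 : ℝ)) s :=
      HasDerivAt.prodMk (hasDerivAt_id s) (hasDerivAt_const s t)
    have h2 : HasDerivAt (fun s' => a s' t) (fderiv ℝ f (s, t) (1, 0)) s :=
      by have := (hfd (s, t)).hasFDerivAt.comp_hasDerivAt s h1; exact this
    rw [← h2.deriv, has s t]
  have hB : ∀ s t : ℝ, fderiv ℝ f (s, t) (0, 1) = -h t * deriv c s / c s := by
    intro s t
    have h1 : HasDerivAt (fun t' : ℝ => (s, t')) ((0 : ℝ), (1 : ℝ)) t :=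
      HasDerivAt.prodMk (hasDerivAt_const t s) (hasDerivAt_id t)
    have h2 : HasDerivAt (fun t' => a s t') (fderiv ℝ f (s, t) (0, 1)) t :=
      (hfd (s, t)).hasFDerivAt.comp_hasDerivAt t h1
    rw [← h2.deriv, hat s t]
  -- mixed partials via second fderiv
  have hmix : ∀ s t : ℝ,
      -ε * deriv (deriv h) t / (c s) ^ 2 =
        (-h t * deriv (deriv c) s * c s - -h t * deriv c s * deriv c s) / c s ^ 2 := by
    intro s t
    -- ∂/∂t of fderiv f (s,t) (1,0)
    have h1 : HasDerivAt (fun t' : ℝ => (s, t')) ((0 : ℝ), (1 : ℝ)) t :=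
      HasDerivAt.prodMk (hasDerivAt_const t s) (hasDerivAt_id t)
    have h2 : HasDerivAt (fun t' => fderiv ℝ f (s, t'))
        (fderiv ℝ (fderiv ℝ f) (s, t) (0, 1)) t :=
      (hFd (s, t)).hasFDerivAt.comp_hasDerivAt t h1
    have h3 : HasDerivAt (fun t' => fderiv ℝ f (s, t') (1, 0))
        (fderiv ℝ (fderiv ℝ f) (s, t) (0, 1) (1, 0)) t := by
      have := h2.clm_apply (hasDerivAt_const t ((1 : ℝ), (0 : ℝ)))
      simpa using this
    have h3' : HasDerivAt (fun t' => -ε * deriv h t' / (c s) ^ 2)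
        (fderiv ℝ (fderiv ℝ f) (s, t) (0, 1) (1, 0)) t := by
      have heq : (fun t' => fderiv ℝ f (s, t') (1, 0)) =
          (fun t' => -ε * deriv h t' / (c s) ^ 2) := funext fun t' => hA s t'
      rwa [heq] at h3
    have h4 : HasDerivAt (fun t' => -ε * deriv h t' / (c s) ^ 2)
        (-ε * deriv (deriv h) t / (c s) ^ 2) t :=
      (((hh1 t).hasDerivAt).const_mul (-ε)).div_const ((c s) ^ 2)
    have e1 : -ε * deriv (deriv h) t / (c s) ^ 2 =
        fderiv ℝ (fderiv ℝ f) (s, t) (0, 1) (1, 0) := h4.unique h3'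
    -- ∂/∂s of fderiv f (s,t) (0,1)
    have g1 : HasDerivAt (fun s' : ℝ => (s', t)) ((1 : ℝ), (0 : ℝ)) s :=
      HasDerivAt.prodMk (hasDerivAt_id s) (hasDerivAt_const s t)
    have g2 : HasDerivAt (fun s' => fderiv ℝ f (s', t))
        (fderiv ℝ (fderiv ℝ f) (s, t) (1, 0)) s :=
      (hFd (s, t)).hasFDerivAt.comp_hasDerivAt s g1
    have g3 : HasDerivAt (fun s' => fderiv ℝ f (s', t) (0, 1))
        (fderiv ℝ (fderiv ℝ f) (s, t) (1, 0) (0, 1)) s := by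
      have := g2.clm_apply (hasDerivAt_const s ((0 : ℝ), (1 : ℝ)))
      simpa using this
    have g3' : HasDerivAt (fun s' => -h t * deriv c s' / c s')
        (fderiv ℝ (fderiv ℝ f) (s, t) (1, 0) (0, 1)) s := by
      have heq : (fun s' => fderiv ℝ f (s', t) (0, 1)) =
          (fun s' => -h t * deriv c s' / c s') := funext fun s' => hB s' t
      rwa [heq] at g3
    have g4 : HasDerivAt (fun s' => -h t * deriv c s' / c s')
        ((-h t * deriv (deriv c) s * c s - -h t * deriv c s * deriv c s) / c s ^ 2) s :=
      (((hc1 s).hasDerivAt).const_mul (-h t)).div ((hcd s).hasDerivAt)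
        (ne_of_gt (hcpos s))
    have e2 : (-h t * deriv (deriv c) s * c s - -h t * deriv c s * deriv c s) / c s ^ 2 =
        fderiv ℝ (fderiv ℝ f) (s, t) (1, 0) (0, 1) := g4.unique g3'
    -- symmetry of second derivative
    have hsymm := second_derivative_symmetric (f' := fderiv ℝ f)
      (fun x => (hfd x).hasFDerivAt) ((hFd (s, t)).hasFDerivAt)
      ((1 : ℝ), (0 : ℝ)) ((0 : ℝ), (1 : ℝ))
    rw [e1, e2, hsymm]
  -- extract the separated equation
  have key : ∀ s t : ℝ, ε * deriv (deriv h) t =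
      h t * (deriv (deriv c) s * c s - (deriv c s) ^ 2) := by
    intro s t
    have := hmix s t
    have hcne : (c s) ^ 2 ≠ 0 := pow_ne_zero 2 (ne_of_gt (hcpos s))
    field_simp at this
    have h6 : -(ε * deriv (deriv h) t) =
        -(h t * deriv (deriv c) s * c s) + h t * deriv c s * deriv c s :=
      mul_right_cancel₀ hcne (by have h7 := (div_left_inj' hcne).mp (hmix s t); linear_combination (c s ^ 2) * h7)
    linear_combination -h6
  have hKs : ∀ s : ℝ, deriv (deriv c) s * c s - (deriv c s) ^ 2 =
      ε * deriv (deriv h) t₀ / h t₀ := by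
    intro s
    rw [eq_div_iff ht₀]
    linear_combination -key s t₀
  refine ⟨ε * deriv (deriv h) t₀ / h t₀, hKs, fun t => ?_⟩
  have h3 := key 0 t
  rw [hKs 0] at h3
  linear_combination ε * h3 - deriv (deriv h) t * hε2
end

section
/- Let ε ∈ {−1, 1}, r > 0, let h : ℝ → ℝ be C², and let a : ℝ² → ℝ be a C² function satisfying, for all (s,t) ∈ ℝ²: ∂a/∂s (s,t) = −ε·h′(t)/cosh²(rs) and ∂a/∂t (s,t) = −r·h(t)·tanh(rs). Then h″(t) = ε·r²·h(t) for all t ∈ ℝ, and there exists γ ∈ ℝ such that a(s,t) = −(ε/r)·h′(t)·tanh(rs) + γ for all (s,t) ∈ ℝ². -/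
open Real

lemma aux_hasDerivAt_tanh (x : ℝ) :
    HasDerivAt Real.tanh (1 / Real.cosh x ^ 2) x := by
  have hc : Real.cosh x ≠ 0 := (Real.cosh_pos x).ne'
  have this := (Real.hasDerivAt_sinh x).div (Real.hasDerivAt_cosh x) hc
  have heq : (Real.cosh x * Real.cosh x - Real.sinh x * Real.sinh x) / Real.cosh x ^ 2
      = 1 / Real.cosh x ^ 2 := by
    rw [show Real.cosh x * Real.cosh x - Real.sinh x * Real.sinh x
        = Real.cosh x ^ 2 - Real.sinh x ^ 2 by ring, Real.cosh_sq_sub_sinh_sq]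
  rw [heq] at this
  have hfun : Real.tanh = fun y => Real.sinh y / Real.cosh y :=
    funext fun y => Real.tanh_eq_sinh_div_cosh y
  rw [hfun]
  exact this

/-- Hyperbolic case of the classification of standard static vector fields on
`(ℝ², ds² + ε cosh²(rs) dt²)`: the Killing system forces `h″ = εr²h` and
`a(s,t) = −(ε/r) h′(t) tanh(rs) + γ`. -/
theorem stmt_7 (ε : ℝ) (hε : ε = -1 ∨ ε = 1) (r : ℝ) (hr : 0 < r)
    (h : ℝ → ℝ) (hh : ContDiff ℝ 2 h)
    (a : ℝ → ℝ → ℝ) (ha : ContDiff ℝ 2 (fun p : ℝ × ℝ => a p.1 p.2))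
    (has : ∀ s t : ℝ,
      deriv (fun s' => a s' t) s = -ε * deriv h t / (Real.cosh (r * s)) ^ 2)
    (hat : ∀ s t : ℝ,
      deriv (fun t' => a s t') t = -r * h t * Real.tanh (r * s)) :
    (∀ t : ℝ, deriv (deriv h) t = ε * r ^ 2 * h t) ∧
      ∃ γ : ℝ, ∀ s t : ℝ,
        a s t = -(ε / r) * deriv h t * Real.tanh (r * s) + γ := by
  have hε2 : ε * ε = 1 := by rcases hε with h1 | h1 <;> rw [h1] <;> norm_num
  have hεne : ε ≠ 0 := by rcases hε with h1 | h1 <;> rw [h1] <;> norm_num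
  have hadiff : Differentiable ℝ (fun p : ℝ × ℝ => a p.1 p.2) :=
    ha.differentiable (by norm_num)
  have hdiffs : ∀ t : ℝ, Differentiable ℝ (fun s => a s t) := fun t =>
    hadiff.comp (differentiable_id.prodMk (differentiable_const t))
  have hdifft : ∀ s : ℝ, Differentiable ℝ (fun t => a s t) := fun s =>
    hadiff.comp ((differentiable_const s).prodMk differentiable_id)
  have hhd : Differentiable ℝ (deriv h) := by
    have : ContDiff ℝ 1 (deriv h) := ((contDiff_succ_iff_deriv).1
      (show ContDiff ℝ (1 + 1) h from hh)).2.2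
    exact this.differentiable one_ne_zero
  have htanh : ∀ x : ℝ, HasDerivAt (fun s => Real.tanh (r * s))
      (1 / Real.cosh (r * x) ^ 2 * r) x := by
    intro x
    have hlin : HasDerivAt (fun y : ℝ => r * y) r x := by
      simpa using (hasDerivAt_id x).const_mul r
    exact (aux_hasDerivAt_tanh (r * x)).comp x hlin
  -- step 1: a s t = a 0 t - (ε/r) h'(t) tanh(rs)
  have key : ∀ s t : ℝ, a s t = a 0 t - ε / r * deriv h t * Real.tanh (r * s) := by
    intro s t
    set F : ℝ → ℝ := fun s => a s t + ε / r * deriv h t * Real.tanh (r * s) with hF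
    have hFdiff : Differentiable ℝ F := by
      apply (hdiffs t).add
      apply Differentiable.const_mul
      exact fun x => (htanh x).differentiableAt
    have hFderiv : ∀ x : ℝ, deriv F x = 0 := by
      intro x
      have h1 : deriv F x = deriv (fun s => a s t) x
          + ε / r * deriv h t * (1 / Real.cosh (r * x) ^ 2 * r) := by
        rw [hF]
        rw [deriv_fun_add (hdiffs t x) (((htanh x).const_mul (ε / r * deriv h t)).differentiableAt)]
        rw [((htanh x).const_mul (ε / r * deriv h t)).deriv]
      rw [h1, has x t]
      have hc : Real.cosh (r * x) ^ 2 ≠ 0 := by positivity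
      field_simp
      ring
    have := is_const_of_deriv_eq_zero hFdiff hFderiv s 0
    simp only [hF, mul_zero, Real.tanh_zero] at this
    linarith [this]
  -- step 2: a 0 t is constant
  have hκ : ∀ t : ℝ, a 0 t = a 0 0 := by
    intro t
    apply is_const_of_deriv_eq_zero (hdifft 0)
    intro x
    have := hat 0 x
    simpa using this
  -- step 3: the ODE
  have hode : ∀ t : ℝ, deriv (deriv h) t = ε * r ^ 2 * h t := by
    intro t
    have hfun : (fun t' => a 1 t') =
        fun t' => a 0 0 - ε / r * deriv h t' * Real.tanh (r * 1) := by
      funext t'; rw [key 1 t', hκ t']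
    have hderiv : -r * h t * Real.tanh (r * 1)
        = -(ε / r * deriv (deriv h) t * Real.tanh (r * 1)) := by
      rw [← hat 1 t, hfun]
      rw [show (fun t' => a 0 0 - ε / r * deriv h t' * Real.tanh (r * 1))
          = fun t' => a 0 0 - ε / r * Real.tanh (r * 1) * deriv h t' by funext x; ring]
      rw [deriv_const_sub, deriv_const_mul _ (hhd t)]
      ring
    have htne : Real.tanh (r * 1) ≠ 0 := by
      rw [Real.tanh_eq_sinh_div_cosh]
      have hs : 0 < Real.sinh (r * 1) := by
        rw [Real.sinh_pos_iff]; linarith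
      positivity
    have h2 : (-r * h t) * Real.tanh (r * 1)
        = (-(ε / r * deriv (deriv h) t)) * Real.tanh (r * 1) := by
      linear_combination hderiv
    have h3 := mul_right_cancel₀ htne h2
    have h4 : ε * deriv (deriv h) t = r ^ 2 * h t := by
      field_simp at h3
      linarith [h3]
    rcases hε with h1 | h1 <;> rw [h1] at h4 ⊢ <;> linarith [h4]
  refine ⟨hode, ⟨a 0 0, fun s t => ?_⟩⟩
  rw [key s t, hκ t]
  ring
end

section
/- Let ε ∈ {−1, 1}, r ∈ ℝ with r ≠ 0, let h : ℝ → ℝ be C², and let a : ℝ² → ℝ be a C² function satisfying, for all (s,t) ∈ ℝ²: ∂a/∂s (s,t) = −ε·h′(t)·e^{−2rs} and ∂a/∂t (s,t) = −r·h(t). Then there exist α, β, γ ∈ ℝ such that h(t) = α t + β for all t ∈ ℝ and a(s,t) = (εα/(2r))·e^{−2rs} − (rα/2)·t² − rβ·t + γ for all (s,t) ∈ ℝ². -/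
/-- Exponential case of the classification of standard static vector fields on
`(ℝ², ds² + ε e^{2rs} dt²)`: the Killing system forces `h(t) = αt + β` and
`a(s,t) = (εα/(2r)) e^{−2rs} − (rα/2) t² − rβ t + γ`. -/
theorem stmt_8 (ε : ℝ) (hε : ε = -1 ∨ ε = 1) (r : ℝ) (hr : r ≠ 0)
    (h : ℝ → ℝ) (hh : ContDiff ℝ 2 h)
    (a : ℝ → ℝ → ℝ) (ha : ContDiff ℝ 2 (fun p : ℝ × ℝ => a p.1 p.2))
    (has : ∀ s t : ℝ,
      deriv (fun s' => a s' t) s = -ε * deriv h t * Real.exp (-2 * r * s))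
    (hat : ∀ s t : ℝ, deriv (fun t' => a s t') t = -r * h t) :
    ∃ α β γ : ℝ, (∀ t : ℝ, h t = α * t + β) ∧
      ∀ s t : ℝ, a s t = (ε * α / (2 * r)) * Real.exp (-2 * r * s)
        - (r * α / 2) * t ^ 2 - r * β * t + γ := by
  have hεne : ε ≠ 0 := by rcases hε with h' | h' <;> rw [h'] <;> norm_num
  have hda : Differentiable ℝ (fun p : ℝ × ℝ => a p.1 p.2) :=
    ha.differentiable (by norm_num)
  have hdas : ∀ t, Differentiable ℝ (fun s => a s t) := fun t =>
    hda.comp (differentiable_id.prodMk (differentiable_const t))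
  have hdat : ∀ s, Differentiable ℝ (fun t => a s t) := fun s =>
    hda.comp ((differentiable_const s).prodMk differentiable_id)
  have hdh : Differentiable ℝ h := hh.differentiable (by norm_num)
  have hh1 : ContDiff ℝ 1 (deriv h) :=
    (contDiff_succ_iff_deriv.mp (by exact_mod_cast hh : ContDiff ℝ (1 + 1) h)).2.2
  have hdh' : Differentiable ℝ (deriv h) := hh1.differentiable one_ne_zero
  have hexp : ∀ s : ℝ, HasDerivAt (fun s' => Real.exp (-2 * r * s'))
      (Real.exp (-2 * r * s) * (-2 * r)) s := by
    intro s
    have h1 : HasDerivAt (fun s' : ℝ => -2 * r * s') (-2 * r) s := by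
      simpa using (hasDerivAt_id s).const_mul (-2 * r)
    simpa using h1.exp
  have key : ∀ s t : ℝ,
      a s t = a 0 t + deriv h t * (ε / (2 * r) * (Real.exp (-2 * r * s) - 1)) := by
    intro s t
    set F : ℝ → ℝ :=
      fun s' => a 0 t + deriv h t * (ε / (2 * r) * (Real.exp (-2 * r * s') - 1)) with hF
    have hFd : ∀ x, HasDerivAt F (-ε * deriv h t * Real.exp (-2 * r * x)) x := by
      intro x
      have h2 := ((((hexp x).sub_const 1).const_mul (ε / (2 * r))).const_mul
        (deriv h t)).const_add (a 0 t)
      refine h2.congr_deriv ?_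
      field_simp
    have hdF : Differentiable ℝ F := fun x => (hFd x).differentiableAt
    have hzero : ∀ x, deriv (fun s' => a s' t - F s') x = 0 := by
      intro x
      rw [deriv_fun_sub ((hdas t) x) (hdF x), has x t, (hFd x).deriv]
      ring
    have hcon := is_const_of_deriv_eq_zero ((hdas t).sub hdF) hzero s 0
    have hF0 : F 0 = a 0 t := by simp [hF]
    have hFs : F s = a 0 t + deriv h t * (ε / (2 * r) * (Real.exp (-2 * r * s) - 1)) := rfl
    have hcon' : a s t - F s = a 0 t - F 0 := hcon
    have h3 : a s t - F s = 0 := by rw [hcon', hF0, sub_self]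
    exact (sub_eq_zero.mp h3).trans hFs
  set α := deriv h 0 with hα
  have hc : ε / (2 * r) * (Real.exp (-2 * r * 1) - 1) ≠ 0 := by
    have hne : Real.exp (-2 * r * 1) ≠ 1 := by
      rw [← Real.exp_zero]
      intro hcontra
      have := Real.exp_injective hcontra
      simp at this
      exact hr this
    have : Real.exp (-2 * r * 1) - 1 ≠ 0 := sub_ne_zero.mpr hne
    positivity
  have hsec : ∀ t, deriv (deriv h) t = 0 := by
    intro t
    have heq : (fun t' => a 1 t')
        = fun t' => a 0 t' + deriv h t' * (ε / (2 * r) * (Real.exp (-2 * r * 1) - 1)) := by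
      funext t'; exact key 1 t'
    have hd1 : deriv (fun t' => a 1 t') t = -r * h t := hat 1 t
    rw [heq, deriv_fun_add ((hdat 0) t) ((hdh' t).mul_const _),
      deriv_mul_const (hdh' t), hat 0 t] at hd1
    have : deriv (deriv h) t * (ε / (2 * r) * (Real.exp (-2 * r * 1) - 1)) = 0 := by
      linarith
    exact (mul_eq_zero.mp this).resolve_right hc
  have hconst : ∀ t, deriv h t = α := fun t => is_const_of_deriv_eq_zero hdh' hsec t 0
  have hlin : ∀ t : ℝ, h t = α * t + h 0 := by
    intro t
    have hd : Differentiable ℝ (fun t : ℝ => h t - α * t) :=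
      hdh.sub ((differentiable_id.const_mul α))
    have hz : ∀ x, deriv (fun t : ℝ => h t - α * t) x = 0 := by
      intro x
      have hid : HasDerivAt (fun t : ℝ => α * t) α x := by
        simpa using (hasDerivAt_id x).const_mul α
      rw [show deriv (fun t : ℝ => h t - α * t) x = _ from (((hdh x).hasDerivAt).sub hid).deriv, hconst x]; ring
    have h2 : h t - α * t = h 0 - α * 0 := is_const_of_deriv_eq_zero hd hz t 0
    linarith
  set β := h 0 with hβ
  have ha0 : ∀ t : ℝ, a 0 t = -(r * α / 2) * t ^ 2 - r * β * t + a 0 0 := by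
    intro t
    set p : ℝ → ℝ := fun t => -(r * α / 2) * t ^ 2 - r * β * t + a 0 0 with hp
    have hpd : ∀ x, HasDerivAt p (-(r * α / 2) * (2 * x ^ 1) - r * β * 1) x := by
      intro x
      exact (((hasDerivAt_pow 2 x).const_mul (-(r * α / 2))).sub
        ((hasDerivAt_id x).const_mul (r * β))).add_const (a 0 0)
    have hdp : Differentiable ℝ p := fun x => (hpd x).differentiableAt
    have hz : ∀ x, deriv (fun t => a 0 t - p t) x = 0 := by
      intro x
      rw [deriv_fun_sub ((hdat 0) x) (hdp x), hat 0 x, (hpd x).deriv, hlin x]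
      ring
    have hcon := is_const_of_deriv_eq_zero ((hdat 0).sub hdp) hz t 0
    have hp0 : p 0 = a 0 0 := by simp [hp]
    have hpt : p t = -(r * α / 2) * t ^ 2 - r * β * t + a 0 0 := rfl
    have hcon' : a 0 t - p t = a 0 0 - p 0 := hcon
    have h3 : a 0 t - p t = 0 := by rw [hcon', hp0, sub_self]
    exact (sub_eq_zero.mp h3).trans hpt
  refine ⟨α, β, a 0 0 - ε * α / (2 * r), hlin, fun s t => ?_⟩
  rw [key s t, ha0 t, hconst t]
  field_simp
  ring
end

section
/- Let a ≥ 0 and b ∈ ℝ. There is no C² function λ : ℝ → ℝ with λ(u) > 0 and λ′(u) ≠ 0 for all u ∈ ℝ that satisfies λ′(u)² = −a − b/λ(u) for all u ∈ ℝ. -/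
/-- No positive `C²` function on `ℝ` without critical points can satisfy
`(λ′)² = −a − b/λ` with `a ≥ 0`. -/
theorem stmt_12 (a b : ℝ) (ha : 0 ≤ a) :
    ¬ ∃ l : ℝ → ℝ, ContDiff ℝ 2 l ∧ (∀ u : ℝ, 0 < l u) ∧
      (∀ u : ℝ, deriv l u ≠ 0) ∧
      (∀ u : ℝ, (deriv l u) ^ 2 = -a - b / l u) := by
  rintro ⟨l, hC, hpos, hne, hsq⟩
  have hld : Differentiable ℝ l := hC.differentiable (by norm_num)
  have h2 : ContDiff ℝ ((1 : ℕ) + 1) l := by exact_mod_cast hC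
  have hfC : ContDiff ℝ (1 : ℕ) (deriv l) := (contDiff_succ_iff_deriv.1 h2).2.2
  have hfd : Differentiable ℝ (deriv l) := hfC.differentiable (by norm_num)
  -- b < 0
  have hb : b < 0 := by
    have h0 := hsq 0
    have hne0 := hne 0
    have hp0 := hpos 0
    have hsqpos : 0 < deriv l 0 ^ 2 := by positivity
    have hdiv : b / l 0 < 0 := by linarith
    by_contra h
    push_neg at h
    have : 0 ≤ b / l 0 := div_nonneg h hp0.le
    linarith
  -- second derivative
  have hdd : ∀ u, deriv (deriv l) u < 0 := by
    intro u
    have h1 : HasDerivAt (fun u => (deriv l u) ^ 2)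
        (2 * deriv l u * deriv (deriv l) u) u := by
      simpa using ((hfd u).hasDerivAt.fun_pow 2)
    have h2' : HasDerivAt (fun u => -a - b / l u)
        (-(b * (-deriv l u / (l u) ^ 2))) u := by
      have hinv : HasDerivAt (fun u => (l u)⁻¹) (-deriv l u / (l u) ^ 2) u :=
        (hld u).hasDerivAt.inv (hpos u).ne'
      have := (hinv.const_mul b).const_sub (-a)
      simpa [div_eq_mul_inv, mul_comm] using this
    have heq : (fun u => (deriv l u) ^ 2) = fun u => -a - b / l u := funext hsq
    rw [heq] at h1
    have huniq : 2 * deriv l u * deriv (deriv l) u = -(b * (-deriv l u / (l u) ^ 2)) :=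
      h1.unique h2'
    have hl2 : (0:ℝ) < (l u) ^ 2 := pow_pos (hpos u) 2
    have hne' := hne u
    have h4 : deriv l u * (2 * deriv (deriv l) u * l u ^ 2 - b) = 0 := by
      field_simp at huniq
      rw [huniq, div_mul_cancel₀ _ hl2.ne', sub_self, mul_zero]
    have h5 : 2 * deriv (deriv l) u * l u ^ 2 - b = 0 :=
      (mul_eq_zero.1 h4).resolve_left hne'
    nlinarith [h5, hl2, hb]
  have hanti : StrictAnti (deriv l) := strictAnti_of_deriv_neg hdd
  -- MVT contradiction
  have key : ∀ u : ℝ, u ≠ 0 → l u < l 0 + deriv l 0 * u := by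
    intro u hu
    rcases lt_or_gt_of_ne hu with hneg | hposu
    · obtain ⟨c, hc, hslope⟩ := exists_deriv_eq_slope l hneg
        (hld.continuous.continuousOn) (hld.differentiableOn)
      have hc0 : c < 0 := hc.2
      have : deriv l 0 < deriv l c := hanti hc0
      rw [hslope] at this
      have hupos : 0 < 0 - u := by linarith
      have := (lt_div_iff₀ hupos).1 this
      nlinarith
    · obtain ⟨c, hc, hslope⟩ := exists_deriv_eq_slope l hposu
        (hld.continuous.continuousOn) (hld.differentiableOn)
      have hc0 : 0 < c := hc.1
      have : deriv l c < deriv l 0 := hanti hc0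
      rw [hslope] at this
      have hupos : 0 < u - 0 := by linarith
      have := (div_lt_iff₀ hupos).1 this
      nlinarith
  set u : ℝ := (-(l 0) - 1) / deriv l 0 with hu
  have hune : u ≠ 0 := by
    have : -(l 0) - 1 ≠ 0 := by have := hpos 0; intro h; linarith [h]
    exact div_ne_zero this (hne 0)
  have hlin : deriv l 0 * u = -(l 0) - 1 := by
    rw [hu, mul_comm, div_mul_cancel₀ _ (hne 0)]
  have := key u hune
  rw [hlin] at this
  linarith [hpos u]
end

section
/- Let a ≥ 0 and b ∈ ℝ. There is no C² function λ : [0, ∞) → ℝ with λ(u) > 0 for all u ≥ 0, λ′(0) = 0, λ′(u) ≠ 0 for all u > 0, that satisfies λ′(u)² = −a − b/λ(u) for all u ≥ 0. -/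
/-- No positive `C²` function on `[0,∞)` with `λ′(0) = 0` and no further
critical points can satisfy `(λ′)² = −a − b/λ` with `a ≥ 0` (derivatives on
`[0,∞)` taken one-sidedly at `0`). -/
theorem stmt_13 (a b : ℝ) (ha : 0 ≤ a) :
    ¬ ∃ l : ℝ → ℝ, ContDiffOn ℝ 2 l (Set.Ici (0 : ℝ)) ∧
      (∀ u : ℝ, 0 ≤ u → 0 < l u) ∧
      derivWithin l (Set.Ici (0 : ℝ)) 0 = 0 ∧
      (∀ u : ℝ, 0 < u → derivWithin l (Set.Ici (0 : ℝ)) u ≠ 0) ∧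
      (∀ u : ℝ, 0 ≤ u →
        (derivWithin l (Set.Ici (0 : ℝ)) u) ^ 2 = -a - b / l u) := by
  rintro ⟨l, hc2, hpos, hd0, hdne, heq⟩
  set f : ℝ → ℝ := derivWithin l (Set.Ici (0 : ℝ)) with hf
  -- continuity of f on Ici 0
  have hfc : ContinuousOn f (Set.Ici (0 : ℝ)) :=
    (hc2.derivWithin (uniqueDiffOn_Ici 0) (m := 1) (by norm_num)).continuousOn
  have hlc : ContinuousOn l (Set.Ici (0 : ℝ)) := hc2.continuousOn
  have hder : ∀ u : ℝ, 0 ≤ u → HasDerivWithinAt l (f u) (Set.Ici (0 : ℝ)) u := by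
    intro u hu
    exact ((hc2.differentiableOn (by norm_num)) u hu).hasDerivWithinAt
  have hderAt : ∀ u : ℝ, 0 < u → HasDerivAt l (f u) u := by
    intro u hu
    exact (hder u hu.le).hasDerivAt (Ici_mem_nhds hu)
  have hL0 : 0 < l 0 := hpos 0 le_rfl
  -- value of b
  have hb : b = -a * l 0 := by
    have h := heq 0 le_rfl
    rw [hd0] at h
    have h2 : b / l 0 = -a := by linarith [h]
    field_simp at h2
    linarith
  -- a > 0
  have hapos : 0 < a := by
    rcases ha.lt_or_eq with h | h
    · exact h
    · exfalso
      have hb0 : b = 0 := by rw [hb, ← h]; ring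
      have h1 := heq 1 (by norm_num)
      rw [hb0, ← h] at h1
      simp at h1
      exact hdne 1 (by norm_num) h1
  have hbneg : b < 0 := by rw [hb]; nlinarith
  -- l u ≤ l 0 for all u ≥ 0
  have hle : ∀ u : ℝ, 0 ≤ u → l u ≤ l 0 := by
    intro u hu
    have h := heq u hu
    have hlu := hpos u hu
    have hcancel : b / l u * l u = b := div_mul_cancel₀ _ (ne_of_gt hlu)
    nlinarith [sq_nonneg (f u), h, hb]
  -- f is negative on (0,∞)
  have hneg : ∀ u : ℝ, 0 < u → f u < 0 := by
    intro u1 hu1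
    by_contra hcon
    push_neg at hcon
    have hfu1 : 0 < f u1 := lt_of_le_of_ne hcon (fun h => hdne u1 hu1 h.symm)
    -- f positive on (0, u1]
    have hposf : ∀ x ∈ Set.Ioo (0:ℝ) u1, 0 < f x := by
      intro x hx
      by_contra hx2
      push_neg at hx2
      have hx3 : f x < 0 := lt_of_le_of_ne hx2 (hdne x hx.1)
      have hsub : Set.Icc x u1 ⊆ Set.Ici (0:ℝ) :=
        Set.Icc_subset_Ici_iff (le_of_lt hx.2) |>.mpr hx.1.le
      have := intermediate_value_Ioo (le_of_lt hx.2) (hfc.mono hsub)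
      have h0 : (0:ℝ) ∈ Set.Ioo (f x) (f u1) := ⟨hx3, hfu1⟩
      obtain ⟨y, hy, hy0⟩ := this h0
      exact hdne y (lt_trans hx.1 hy.1) hy0
    -- l strictly increasing on [0, u1]
    have hmono : StrictMonoOn l (Set.Icc 0 u1) := by
      apply strictMonoOn_of_deriv_pos (convex_Icc 0 u1)
        (hlc.mono (Set.Icc_subset_Ici_iff hu1.le |>.mpr le_rfl))
      intro x hx
      rw [interior_Icc] at hx
      rw [(hderAt x hx.1).deriv]
      exact hposf x hx
    have := hmono (Set.left_mem_Icc.mpr hu1.le) (Set.right_mem_Icc.mpr hu1.le) hu1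
    exact absurd (hle u1 hu1.le) (not_le.mpr this)
  -- l strictly decreasing on [0, ∞)
  have hanti : StrictAntiOn l (Set.Ici 0) := by
    apply strictAntiOn_of_deriv_neg (convex_Ici 0) hlc
    intro x hx
    rw [interior_Ici] at hx
    rw [(hderAt x hx).deriv]
    exact hneg x hx
  -- quantitative bound on [1, ∞)
  set c : ℝ := -f 1 with hc
  have hcpos : 0 < c := by
    have := hneg 1 (by norm_num)
    simp only [hc]; linarith
  have hl1 : 0 < l 1 := hpos 1 (by norm_num)
  have hfle : ∀ u : ℝ, 1 ≤ u → f u ≤ -c := by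
    intro u hu
    have hu0 : (0:ℝ) ≤ u := by linarith
    have hlu : 0 < l u := hpos u hu0
    have hlul1 : l u ≤ l 1 := by
      rcases eq_or_lt_of_le hu with h | h
      · rw [← h]
      · exact le_of_lt (hanti (by norm_num) (by exact le_trans (by norm_num) hu0) h)
    have h1 := heq 1 (by norm_num)
    have h2 := heq u hu0
    have hcan1 : b / l 1 * l 1 = b := div_mul_cancel₀ _ (ne_of_gt hl1)
    have hcanu : b / l u * l u = b := div_mul_cancel₀ _ (ne_of_gt hlu)
    -- f u ^ 2 ≥ f 1 ^ 2 = c ^ 2, f u < 0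
    have hsq : c ^ 2 ≤ f u ^ 2 := by
      have hdivle : b / l u ≤ b / l 1 := by
        rw [div_le_div_iff₀ hlu hl1]
        nlinarith
      have : f 1 ^ 2 ≤ f u ^ 2 := by rw [h1, h2]; linarith
      simpa [hc] using this
    have hfu : f u < 0 := hneg u (by linarith)
    nlinarith
  -- g = l + c * id is antitone on [1, ∞)
  have hganti : AntitoneOn (fun u => l u + c * u) (Set.Ici 1) := by
    apply antitoneOn_of_deriv_nonpos (convex_Ici 1)
    · exact ((hlc.mono (Set.Ici_subset_Ici.mpr (by norm_num))).add
        (continuousOn_const.mul continuousOn_id))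
    · intro x hx
      rw [interior_Ici, Set.mem_Ioi] at hx
      exact ((hderAt x (by linarith)).add ((hasDerivAt_id x).const_mul c)).differentiableAt.differentiableWithinAt
    · intro x hx
      rw [interior_Ici, Set.mem_Ioi] at hx
      have hd : HasDerivAt (fun u => l u + c * u) (f x + c * 1) x :=
        (hderAt x (by linarith)).add ((hasDerivAt_id x).const_mul c)
      rw [hd.deriv]
      have := hfle x hx.le
      linarith
  -- contradiction at large u
  set U : ℝ := 1 + (l 1 + 1) / c with hU
  have hU1 : 1 ≤ U := by
    have : 0 < (l 1 + 1) / c := div_pos (by linarith) hcpos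
    simp only [hU]; linarith
  have := hganti (Set.mem_Ici.mpr le_rfl) (Set.mem_Ici.mpr hU1) hU1
  have hcU : c * U = c + (l 1 + 1) := by
    rw [hU]
    field_simp
  have hlU : 0 < l U := hpos U (by linarith)
  simp only at this
  nlinarith
end
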